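/- Let Y be a nonempty set, D a countably complete filter on Y, and f : Y → Ord. For every ordinal α ≤ rk_D(f) there exists g : Y → Ord with g(y) ≤ f(y) for all y ∈ Y and rk_D(g) = α; moreover, if α < rk_D(f) then g can additionally be chosen with g <_D f. -/

import Mathlib

/-- `f <_D g` iff `{y | f y < g y} ∈ D`. -/
def ltD {Y : Type} (D : Filter Y) (f g : Y → Ordinal) : Prop :=
  {y | f y < g y} ∈ D

/-- The rank `rk_D f` of `f : Y → Ord` with respect to the (well-founded, for countably
complete `D`) relation `<_D`. -/
noncomputable def rkD {Y : Type} (D : Filter Y) (f : Y → Ordinal) : Ordinal.{1} :=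
  haveI := Classical.dec
  if h : Acc (ltD D) f then h.rank else 0

/-- For countably complete `D`, `<_D` is well-founded. -/
theorem ltD_wf {Y : Type} (D : Filter Y) (hcc : CountableInterFilter D) (hne : D.NeBot) :
    WellFounded (ltD D) := by
  haveI := hcc
  haveI : IsTrans (Y → Ordinal) (ltD D) :=
    ⟨fun a b c hab hbc => by
      refine Filter.mem_of_superset (Filter.inter_mem hab hbc) fun y hy => ?_
      simp only [Set.mem_inter_iff, Set.mem_setOf_eq] at hy
      exact hy.1.trans hy.2⟩
  haveI : IsIrrefl (Y → Ordinal) (ltD D) := by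
    refine ⟨fun a ha => ?_⟩
    have he : (∅ : Set Y) ∈ D := by simp only [ltD, lt_self_iff_false, Set.setOf_false] at ha; exact ha
    exact hne.ne (Filter.empty_mem_iff_bot.1 he)
  haveI : IsStrictOrder (Y → Ordinal) (ltD D) := ⟨⟩
  rw [RelEmbedding.wellFounded_iff_isEmpty]
  constructor
  intro e
  have hmem : ∀ n : ℕ, {y | e (n + 1) y < e n y} ∈ D := by
    intro n
    exact e.map_rel_iff.2 (Nat.lt_succ_self n)
  have hall : (⋂ n : ℕ, {y | e (n + 1) y < e n y}) ∈ D :=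
    countable_iInter_mem.2 hmem
  obtain ⟨y, hy⟩ := Filter.nonempty_of_mem hall
  simp only [Set.mem_iInter, Set.mem_setOf_eq] at hy
  exact RelEmbedding.not_wellFounded
    (RelEmbedding.natGT (fun n => e n y) hy) Ordinal.lt_wf

theorem rank_le_of_sub {α : Type*} {r : α → α → Prop} {a b : α} (ha : Acc r a) (hb : Acc r b)
    (h : ∀ c, r c a → r c b) : ha.rank ≤ hb.rank := by
  rw [ha.rank_eq, hb.rank_eq]
  apply Ordinal.iSup_le
  rintro ⟨c, hc⟩
  have : (ha.inv hc).rank = (hb.inv (h c hc)).rank := by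
    congr 1
  rw [this]
  exact Ordinal.le_iSup (fun d : {d // r d b} => Order.succ (hb.inv d.2).rank) ⟨c, h c hc⟩

/-- `D`-equal functions have the same rank. -/
theorem rank_congr {Y : Type} {D : Filter Y} {g g' : Y → Ordinal}
    (hgg : {y | g y = g' y} ∈ D) (hg : Acc (ltD D) g) (hg' : Acc (ltD D) g') :
    hg.rank = hg'.rank := by
  have key : ∀ (u v : Y → Ordinal), {y | u y = v y} ∈ D → ∀ c, ltD D c u → ltD D c v := by
    intro u v huv c hc
    exact Filter.mem_of_superset (Filter.inter_mem hc huv)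
      (fun y hy => lt_of_lt_of_le hy.1 hy.2.le)
  exact le_antisymm (rank_le_of_sub hg hg' (key g g' hgg))
    (rank_le_of_sub hg' hg (key g' g (Filter.mem_of_superset hgg (fun y hy => hy.symm))))

/-- for a nonempty set `Y`, a countably complete filter `D` on `Y` and
`f : Y → Ord`, every ordinal `α ≤ rk_D f` is of the form `rk_D g` for some `g` with
`g y ≤ f y` everywhere; moreover if `α < rk_D f` then `g` may be chosen with `g <_D f`. -/
theorem stmt1 {Y : Type} [Nonempty Y] (D : Filter Y)
    (hcc : CountableInterFilter D) (hne : D.NeBot)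
    (f : Y → Ordinal) (α : Ordinal.{1}) (hα : α ≤ rkD D f) :
    ∃ g : Y → Ordinal, (∀ y, g y ≤ f y) ∧ rkD D g = α ∧
      (α < rkD D f → ltD D g f) := by
  have wf := ltD_wf D hcc hne
  have hrk : ∀ u : Y → Ordinal, rkD D u = (wf.apply u).rank := by
    intro u
    rw [rkD, dif_pos (wf.apply u)]
  -- restate everything in terms of `Acc.rank` and do well-founded induction on `f`
  suffices h : ∀ f : Y → Ordinal, ∀ α ≤ (wf.apply f).rank,
      ∃ g : Y → Ordinal, (∀ y, g y ≤ f y) ∧ (wf.apply g).rank = α ∧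
        (α < (wf.apply f).rank → ltD D g f) by
    obtain ⟨g, h1, h2, h3⟩ := h f α (by rwa [hrk f] at hα)
    exact ⟨g, h1, by rw [hrk g]; exact h2, fun hlt => h3 (by rwa [hrk f] at hlt)⟩
  clear hα α
  intro f
  induction f using wf.induction with
  | _ f IH =>
    intro α hα
    rcases hα.eq_or_lt with heq | hlt
    · exact ⟨f, fun y => le_rfl, heq.symm, fun h => absurd h (heq ▸ lt_irrefl α)⟩
    · -- find g <_D f with α ≤ rank g
      rw [(wf.apply f).rank_eq, Ordinal.lt_iSup_iff] at hlt
      obtain ⟨⟨g, hgf⟩, hg⟩ := hlt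
      rw [Order.lt_succ_iff] at hg
      have hg' : α ≤ (wf.apply g).rank := by
        have : ((wf.apply f).inv hgf).rank = (wf.apply g).rank := by congr 1
        rwa [this] at hg
      obtain ⟨h, hle, hrank, -⟩ := IH g hgf α hg'
      -- truncate `h` by `f`
      refine ⟨fun y => min (h y) (f y), fun y => min_le_right _ _, ?_, fun _ => ?_⟩
      · have heqD : {y | min (h y) (f y) = h y} ∈ D := by
          refine Filter.mem_of_superset hgf (fun y hy => ?_)
          exact min_eq_left (((hle y).trans_lt hy).le)
        rw [rank_congr heqD (wf.apply _) (wf.apply h), hrank]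
      · refine Filter.mem_of_superset hgf (fun y hy => ?_)
        exact min_lt_iff.2 (Or.inl ((hle y).trans_lt hy))
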